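/- If R is a commutative domain in which every pair (a,b) with b ≠ 0 has a terminating division chain (of some finite length), then R is a Bézout domain: every finitely generated ideal of R is principal. -/

import Mathlib

/-- A `k`-stage division chain starting from `(a, b)`: `s 0 = a`, `s 1 = b` are the
initial values (`r₋₁ = a`, `r₀ = b`), `q i` is the quotient `q_{i+1}`, `s (i+2)` is the
remainder `r_{i+1}`. The last remainder `r_k` is `s (k+1)`. -/
def DivChain {R : Type*} [CommRing R] (a b : R) (k : ℕ) (q s : ℕ → R) : Prop :=
  s 0 = a ∧ s 1 = b ∧ ∀ i < k, s i = q i * s (i + 1) + s (i + 2)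

theorem stmt_2 {R : Type*} [CommRing R] [IsDomain R]
    (H : ∀ a b : R, b ≠ 0 → ∃ k : ℕ, 0 < k ∧ ∃ q s : ℕ → R,
      DivChain a b k q s ∧ s (k + 1) = 0) :
    ∀ I : Ideal R, I.FG → I.IsPrincipal := by
  classical
  have pair : ∀ a b : R, ∃ d : R, Ideal.span {a, b} = Ideal.span {d} := by
    intro a b
    by_cases hb : b = 0
    · exact ⟨a, by simp [hb, Ideal.span_insert, Ideal.span_singleton_eq_bot.mpr]⟩
    · obtain ⟨k, hk, q, s, ⟨h0, h1, hrec⟩, hlast⟩ := H a b hb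
      have step : ∀ i < k, Ideal.span {s i, s (i + 1)} =
          Ideal.span {s (i + 1), s (i + 2)} := by
        intro i hi
        have : s i = s (i + 2) + s (i + 1) * q i := by rw [hrec i hi]; ring
        rw [this, Ideal.span_pair_add_right_mul, Ideal.span_pair_comm]
      have key : ∀ n ≤ k, Ideal.span {s (k - n), s (k - n + 1)} =
          Ideal.span {s k, s (k + 1)} := by
        intro n hn
        induction n with
        | zero => simp
        | succ m ih =>
          have h1' : k - (m + 1) < k := by omega
          have h2' : k - (m + 1) + 1 = k - m := by omega
          have h3' : k - (m + 1) + 2 = k - m + 1 := by omega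
          rw [step _ h1', h2', h3']
          exact ih (by omega)
      have := key k le_rfl
      simp only [Nat.sub_self] at this
      refine ⟨s k, ?_⟩
      rw [← h0, ← h1, this, hlast]
      simp [Ideal.span_insert, Ideal.span_singleton_eq_bot.mpr]
  have finset : ∀ t : Finset R, ∃ d : R, Ideal.span (t : Set R) = Ideal.span {d} := by
    intro t
    induction t using Finset.induction_on with
    | empty => exact ⟨0, by rw [Finset.coe_empty, Ideal.span_empty, Ideal.span_singleton_eq_bot.mpr rfl]⟩
    | insert _ _ hx ih =>
      obtain ⟨d, hd⟩ := ih
      obtain ⟨e, he⟩ := pair _ d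
      refine ⟨e, ?_⟩
      rw [Finset.coe_insert, Ideal.span_insert, hd, ← Ideal.span_insert] at *
      exact he
  intro I hI
  obtain ⟨t, rfl⟩ := hI
  obtain ⟨d, hd⟩ := finset t
  exact ⟨d, by rw [hd]⟩
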